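/- Under the hypotheses of the key inequality (f, g ρ-strongly convex, ∇h L-Lipschitz), with y = prox_{βf}(u), z = prox_{βg}(2y - u + β∇h(y)), and ȳ, x̄ as above, one has ‖2z - 2y + u - ȳ‖² ≤ ‖u - ȳ‖² - 2β(2ρ - L)(‖y - x̄‖² + ‖z - x̄‖²). -/

import Mathlib

open InnerProductSpace Filter

section Defs
variable {H : Type*} [NormedAddCommGroup H] [InnerProductSpace ℝ H] [CompleteSpace H]

def ProperE (f : H → EReal) : Prop := (∀ x, f x ≠ ⊥) ∧ ∃ x, f x ≠ ⊤

def ConvexE (f : H → EReal) : Prop :=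
  ∀ x y : H, ∀ a b : ℝ, 0 ≤ a → 0 ≤ b → a + b = 1 →
    f (a • x + b • y) ≤ (a : EReal) * f x + (b : EReal) * f y

def StrongConvexE (ρ : ℝ) (f : H → EReal) : Prop :=
  ConvexE (fun x => f x - ((ρ / 2 * ‖x‖ ^ 2 : ℝ) : EReal))

def SubdiffE (f : H → EReal) (x : H) : Set H :=
  {u | ∀ z, f x + ((inner ℝ (z - x) u : ℝ) : EReal) ≤ f z}

def IsProx (β : ℝ) (f : H → EReal) (u y : H) : Prop :=
  ∀ v, f y + ((1 / (2 * β) * ‖y - u‖ ^ 2 : ℝ) : EReal)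
      ≤ f v + ((1 / (2 * β) * ‖v - u‖ ^ 2 : ℝ) : EReal)

def StationaryPt (f g : H → EReal) (h' : H → H) (x : H) : Prop :=
  ∃ u ∈ SubdiffE f x, ∃ v ∈ SubdiffE g x, u + v - h' x = 0

def WeakTendsto (x : ℕ → H) (p : H) : Prop :=
  ∀ φ : H →L[ℝ] ℝ, Tendsto (fun n => φ (x n)) atTop (nhds (φ p))

end Defs

section Aux
variable {H : Type*} [NormedAddCommGroup H] [InnerProductSpace ℝ H] [CompleteSpace H]

lemma prox_ne_top' {f : H → EReal} {β : ℝ} {u y : H}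
    (hfp : ProperE f) (hy : IsProx β f u y) : f y ≠ ⊤ := by
  obtain ⟨v, hv⟩ := hfp.2
  intro htop
  have h := hy v
  rw [htop] at h
  have h1 : (⊤ : EReal) + ((1 / (2 * β) * ‖y - u‖ ^ 2 : ℝ) : EReal) = ⊤ := by
    exact EReal.top_add_of_ne_bot (EReal.coe_ne_bot _)
  rw [h1, top_le_iff] at h
  have hvb := hfp.1 v
  lift f v to ℝ using ⟨hv, hvb⟩ with b hb
  rw [← EReal.coe_add] at h
  exact EReal.coe_ne_top _ h

lemma prox_subgrad' {f : H → EReal} {ρ β : ℝ} (hρ : 0 < ρ) (hβ : 0 < β)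
    (hfp : ProperE f) (hsc : StrongConvexE ρ f) {u y : H}
    (hy : IsProx β f u y) (v : H) (hv : f v ≠ ⊤) :
    (f y).toReal + β⁻¹ * (inner ℝ (u - y) (v - y) : ℝ) + ρ / 2 * ‖v - y‖ ^ 2
      ≤ (f v).toReal := by
  have hyt := prox_ne_top' hfp hy
  have hyb := hfp.1 y
  have hvb := hfp.1 v
  set a := (f y).toReal with ha
  set b := (f v).toReal with hbdef
  have hfy : f y = (a : EReal) := (EReal.coe_toReal hyt hyb).symm
  have hfv : f v = (b : EReal) := (EReal.coe_toReal hv hvb).symm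
  set K : ℝ := (ρ / 2 + 1 / 2 * β⁻¹) * ‖v - y‖ ^ 2 with hKdef
  have hK : 0 ≤ K := by positivity
  have key : ∀ t : ℝ, 0 < t → t ≤ 1 →
      a + β⁻¹ * (inner ℝ (u - y) (v - y) : ℝ) + ρ / 2 * ‖v - y‖ ^ 2 ≤ b + t * K := by
    intro t ht ht1
    have hcvx := hsc v y t (1 - t) ht.le (by linarith) (by ring)
    simp only [hfy, hfv, ← EReal.coe_sub, ← EReal.coe_mul, ← EReal.coe_add] at hcvx
    -- hcvx : f (t•v + (1-t)•y) - coe(ρ/2‖t•v+(1-t)•y‖^2) ≤ coe R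
    have hwt : f (t • v + (1 - t) • y) ≠ ⊤ := by
      intro htop
      rw [htop, EReal.top_sub_coe, top_le_iff] at hcvx
      exact EReal.coe_ne_top _ hcvx
    have hwb := hfp.1 (t • v + (1 - t) • y)
    set m := (f (t • v + (1 - t) • y)).toReal with hmdef
    have hfw : f (t • v + (1 - t) • y) = (m : EReal) := (EReal.coe_toReal hwt hwb).symm
    rw [hfw, ← EReal.coe_sub, EReal.coe_le_coe_iff] at hcvx
    have hpx := hy (t • v + (1 - t) • y)
    rw [hfy, hfw, ← EReal.coe_add, ← EReal.coe_add, EReal.coe_le_coe_iff] at hpx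
    -- expansions
    have e1 : t • v + (1 - t) • y = y + t • (v - y) := by module
    have e2 : y + t • (v - y) - u = (y - u) + t • (v - y) := by abel
    have hn1 : ‖y + t • (v - y)‖ ^ 2
        = ‖y‖ ^ 2 + 2 * (t * (inner ℝ y (v - y) : ℝ)) + t ^ 2 * ‖v - y‖ ^ 2 := by
      rw [norm_add_sq_real, real_inner_smul_right, norm_smul]
      simp [mul_pow, sq_abs]
    have hn2 : ‖(y - u) + t • (v - y)‖ ^ 2
        = ‖y - u‖ ^ 2 + 2 * (t * (inner ℝ (y - u) (v - y) : ℝ)) + t ^ 2 * ‖v - y‖ ^ 2 := by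
      rw [norm_add_sq_real, real_inner_smul_right, norm_smul]
      simp [mul_pow, sq_abs]
    have hn3 : ‖v‖ ^ 2 = ‖y‖ ^ 2 + 2 * (inner ℝ y (v - y) : ℝ) + ‖v - y‖ ^ 2 := by
      have : v = y + (v - y) := by abel
      rw [this, norm_add_sq_real]
      simp
    have hip : (inner ℝ (y - u) (v - y) : ℝ) = -(inner ℝ (u - y) (v - y) : ℝ) := by
      rw [← inner_neg_left, neg_sub]
    rw [e1] at hcvx hpx
    rw [e2] at hpx
    rw [hn1] at hcvx
    rw [hn2, hip] at hpx
    have hmain : 0 ≤ t * (b + t * K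
        - (a + β⁻¹ * (inner ℝ (u - y) (v - y) : ℝ) + ρ / 2 * ‖v - y‖ ^ 2)) := by
      have hb' : (1 : ℝ) / (2 * β) = 1 / 2 * β⁻¹ := by
        rw [one_div, mul_inv]
        norm_num
      rw [hb'] at hpx
      rw [hn3] at hcvx
      nlinarith [hcvx, hpx]
    have hX := div_nonneg hmain ht.le
    rw [mul_div_cancel_left₀ _ ht.ne'] at hX
    linarith
  refine le_of_forall_pos_le_add fun ε hε => ?_
  rcases eq_or_lt_of_le hK with hK0 | hKpos
  · have h1 := key 1 one_pos le_rfl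
    rw [← hK0] at h1
    simpa using h1.trans (by linarith)
  · have htpos : 0 < min 1 (ε / K) := lt_min one_pos (div_pos hε hKpos)
    have h2 := key (min 1 (ε / K)) htpos (min_le_left _ _)
    have h3 : min 1 (ε / K) * K ≤ ε := by
      have h4 : min 1 (ε / K) ≤ ε / K := min_le_right _ _
      calc min 1 (ε / K) * K ≤ (ε / K) * K :=
            mul_le_mul_of_nonneg_right h4 hK
        _ = ε := div_mul_cancel₀ _ hKpos.ne'
    linarith

lemma prox_strong_mono' {f : H → EReal} {ρ β : ℝ} (hρ : 0 < ρ) (hβ : 0 < β)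
    (hfp : ProperE f) (hsc : StrongConvexE ρ f) {u₁ y₁ u₂ y₂ : H}
    (h1 : IsProx β f u₁ y₁) (h2 : IsProx β f u₂ y₂) :
    β * ρ * ‖y₁ - y₂‖ ^ 2 ≤ (inner ℝ (y₁ - y₂) ((u₁ - y₁) - (u₂ - y₂)) : ℝ) := by
  have s1 := prox_subgrad' hρ hβ hfp hsc h1 y₂ (prox_ne_top' hfp h2)
  have s2 := prox_subgrad' hρ hβ hfp hsc h2 y₁ (prox_ne_top' hfp h1)
  have e : ‖y₂ - y₁‖ = ‖y₁ - y₂‖ := norm_sub_rev _ _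
  rw [e] at s1
  have i1 : (inner ℝ (u₁ - y₁) (y₂ - y₁) : ℝ) = -(inner ℝ (y₁ - y₂) (u₁ - y₁) : ℝ) := by
    rw [real_inner_comm, ← inner_neg_left, neg_sub]
  have i2 : (inner ℝ (u₂ - y₂) (y₁ - y₂) : ℝ) = (inner ℝ (y₁ - y₂) (u₂ - y₂) : ℝ) :=
    real_inner_comm _ _
  rw [i1] at s1
  rw [i2] at s2
  rw [inner_sub_right]
  have hstep : ρ * ‖y₁ - y₂‖ ^ 2
      ≤ β⁻¹ * ((inner ℝ (y₁ - y₂) (u₁ - y₁) : ℝ) - (inner ℝ (y₁ - y₂) (u₂ - y₂) : ℝ)) := by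
    nlinarith [s1, s2]
  have := mul_le_mul_of_nonneg_left hstep hβ.le
  calc β * ρ * ‖y₁ - y₂‖ ^ 2 = β * (ρ * ‖y₁ - y₂‖ ^ 2) := by ring
    _ ≤ β * (β⁻¹ * (_ - _)) := this
    _ = _ := by field_simp

end Aux

set_option maxHeartbeats 1000000 in
theorem dr_reflected_estimate {H : Type*} [NormedAddCommGroup H] [InnerProductSpace ℝ H] [CompleteSpace H]
    (f g : H → EReal) (h : H → ℝ) (h' : H → H) (ρ L β : ℝ)
    (hρ : 0 < ρ) (hL : 0 < L) (hβ : 0 < β)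
    (hfp : ProperE f) (hflsc : LowerSemicontinuous f) (hfsc : StrongConvexE ρ f)
    (hgp : ProperE g) (hglsc : LowerSemicontinuous g) (hgsc : StrongConvexE ρ g)
    (hconv : ConvexOn ℝ Set.univ h)
    (hgrad : ∀ w, HasGradientAt h (h' w) w)
    (hlip : LipschitzWith (Real.toNNReal L) h')
    (u y z xbar ybar : H)
    (hxbar : StationaryPt f g h' xbar)
    (hy : IsProx β f u y)
    (hz : IsProx β g ((2 : ℝ) • y - u + β • h' y) z)
    (hybar1 : IsProx β f ybar xbar)
    (hybar2 : IsProx β g ((2 : ℝ) • xbar - ybar + β • h' xbar) xbar) :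
    ‖(2 : ℝ) • z - (2 : ℝ) • y + u - ybar‖ ^ 2
      ≤ ‖u - ybar‖ ^ 2 - 2 * β * (2 * ρ - L) * (‖y - xbar‖ ^ 2 + ‖z - xbar‖ ^ 2) := by
  have hA := prox_strong_mono' hρ hβ hfp hfsc hy hybar1
  have hB := prox_strong_mono' hρ hβ hgp hgsc hz hybar2
  have eA : (u - y) - (ybar - xbar) = (u - ybar) - (y - xbar) := by abel
  rw [eA] at hA
  have eB : ((2:ℝ) • y - u + β • h' y - z) - ((2:ℝ) • xbar - ybar + β • h' xbar - xbar)
      = (2:ℝ) • (y - xbar) - (u - ybar) - (z - xbar) + β • (h' y - h' xbar) := by module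
  rw [eB] at hB
  have eg : (2 : ℝ) • z - (2 : ℝ) • y + u - ybar
      = (2:ℝ) • (z - xbar) - (2:ℝ) • (y - xbar) + (u - ybar) := by module
  rw [eg]
  -- Lipschitz bound
  have hd : ‖h' y - h' xbar‖ ≤ L * ‖y - xbar‖ := by
    have hh := hlip.dist_le_mul y xbar
    rw [dist_eq_norm, dist_eq_norm, Real.coe_toNNReal L hL.le] at hh
    exact hh
  have hC : (inner ℝ (z - xbar) (h' y - h' xbar) : ℝ) ≤ L * ‖y - xbar‖ * ‖z - xbar‖ := by
    calc (inner ℝ (z - xbar) (h' y - h' xbar) : ℝ) ≤ ‖z - xbar‖ * ‖h' y - h' xbar‖ :=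
          real_inner_le_norm _ _
      _ ≤ ‖z - xbar‖ * (L * ‖y - xbar‖) :=
          mul_le_mul_of_nonneg_left hd (norm_nonneg _)
      _ = L * ‖y - xbar‖ * ‖z - xbar‖ := by ring
  set a := y - xbar with hadef
  set b := z - xbar with hbdef
  set w := u - ybar with hwdef
  set d := h' y - h' xbar with hddef
  -- expand inner ℝ products
  simp only [inner_sub_right, inner_add_right, real_inner_smul_right,
    real_inner_self_eq_norm_sq] at hA hB
  rw [← real_inner_self_eq_norm_sq ((2:ℝ) • b - (2:ℝ) • a + w)]
  simp only [inner_sub_left, inner_sub_right, inner_add_left, inner_add_right,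
    real_inner_smul_left, real_inner_smul_right, real_inner_self_eq_norm_sq]
  have c1 := real_inner_comm a b
  have c2 := real_inner_comm a w
  have c3 := real_inner_comm b w
  have h1 : 4 * β * (inner ℝ b d : ℝ) ≤ 4 * β * (L * ‖a‖ * ‖b‖) :=
    mul_le_mul_of_nonneg_left hC (by positivity)
  have h2 : 2 * (‖a‖ * ‖b‖) ≤ ‖a‖ ^ 2 + ‖b‖ ^ 2 := by
    nlinarith [sq_nonneg (‖a‖ - ‖b‖)]
  have h3 : (β * L) * (2 * (‖a‖ * ‖b‖)) ≤ (β * L) * (‖a‖ ^ 2 + ‖b‖ ^ 2) :=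
    mul_le_mul_of_nonneg_left h2 (by positivity)
  have n2a : ‖(2:ℝ) • a‖ ^ 2 = 4 * ‖a‖ ^ 2 := by
    rw [norm_smul]; simp [mul_pow]; norm_num
  have n2b : ‖(2:ℝ) • b‖ ^ 2 = 4 * ‖b‖ ^ 2 := by
    rw [norm_smul]; simp [mul_pow]; norm_num
  linarith [hA, hB, h1, h3, c1, c2, c3, n2a, n2b]
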